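/- The coefficients c_n of the asymptotic expansion satisfy c_n ~ Γ(2n+1) · (49/16)^n · n^{-13/14} · b√π/(Γ(1/7)Γ(3/7)) as n → ∞, where b = lim b_n ∈ [1, 1.324]. -/

import Mathlib

open Real Filter

lemma prod_shift_gamma (s : ℝ) (hs : Real.Gamma s ≠ 0) (n : ℕ) :
    Real.Gamma s * ∏ j ∈ Finset.range n, (s + j) = Real.Gamma (s + n) := by
  induction n with
  | zero => simp
  | succ n ih =>
    have hsn : s + (n : ℝ) ≠ 0 := by
      intro h
      apply hs
      rw [Real.Gamma_eq_zero_iff]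
      exact ⟨n, by linarith⟩
    rw [Finset.prod_range_succ, ← mul_assoc, ih,
      show s + ((n + 1 : ℕ) : ℝ) = (s + n) + 1 by push_cast; ring,
      Real.Gamma_add_one hsn]
    ring

lemma gamma_ratio_tendsto (s : ℝ) (hs : Real.Gamma s ≠ 0) :
    Tendsto (fun n : ℕ => Real.Gamma ((n : ℝ) + 1 + s) /
      (Real.Gamma ((n : ℝ) + 1) * (n : ℝ) ^ s)) atTop (nhds 1) := by
  have h := Real.GammaSeq_tendsto_Gamma s
  have h2 : Tendsto (fun n : ℕ => Real.Gamma s / Real.GammaSeq s n) atTop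
      (nhds (Real.Gamma s / Real.Gamma s)) := tendsto_const_nhds.div h hs
  rw [div_self hs] at h2
  refine h2.congr' ?_
  filter_upwards [eventually_ge_atTop 1] with n hn
  rw [Real.GammaSeq, div_div_eq_mul_div, prod_shift_gamma s hs (n + 1),
    show s + ((n + 1 : ℕ) : ℝ) = (n : ℝ) + 1 + s by push_cast; ring,
    ← Real.Gamma_nat_eq_factorial n, mul_comm ((n : ℝ) ^ s)]

lemma gamma_ne_of_frac {s : ℝ} (h0 : s ≠ 0) (hs : -1 < s) : Real.Gamma s ≠ 0 := by
  apply Real.Gamma_ne_zero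
  intro m
  rcases m with _ | m
  · simpa using h0
  · push_cast
    intro h
    have : (0:ℝ) ≤ (m : ℝ) := Nat.cast_nonneg m
    linarith

theorem c_asymptotics (c : ℕ → ℝ) (b : ℝ)
    (hc0 : c 0 = 1)
    (hc : ∀ n : ℕ, 1 ≤ n → c n =
      (7 * (n : ℝ) - 6) * (7 * (n : ℝ) - 4) / 4 * c (n - 1)
      + (1 / 2) * ∑ k ∈ Finset.Icc 1 (n - 1),
          (7 * (n : ℝ) - 7 * (k : ℝ) - 6) * (7 * (n : ℝ) - 7 * (k : ℝ) - 4) / 2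
            * c (n - k - 1) * ∑ i ∈ Finset.range (k + 1), c i * c (k - i)
      - (1 / 2) * ∑ k ∈ Finset.Icc 1 (n - 1), c k * c (n - k))
    (hb : Filter.Tendsto
      (fun n : ℕ => c n / ((49 / 4 : ℝ) ^ n * Real.Gamma ((n : ℝ) + 1 / 7)
        * Real.Gamma ((n : ℝ) + 3 / 7) / (Real.Gamma (1 / 7) * Real.Gamma (3 / 7))))
      Filter.atTop (nhds b))
    (hb1 : 1 ≤ b) (hb2 : b ≤ 1.324) :
    Filter.Tendsto
      (fun n : ℕ => c n /
        (Real.Gamma (2 * (n : ℝ) + 1) * (49 / 16 : ℝ) ^ n * (n : ℝ) ^ (-(13 / 14) : ℝ)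
          * (b * Real.sqrt Real.pi / (Real.Gamma (1 / 7) * Real.Gamma (3 / 7)))))
      Filter.atTop (nhds 1) := by
  have hbpos : (0:ℝ) < b := lt_of_lt_of_le one_pos hb1
  have hKpos : 0 < Real.Gamma (1/7) * Real.Gamma (3/7) :=
    mul_pos (Real.Gamma_pos_of_pos (by norm_num)) (Real.Gamma_pos_of_pos (by norm_num))
  have hsp : 0 < Real.sqrt Real.pi := Real.sqrt_pos.mpr Real.pi_pos
  have hA := gamma_ratio_tendsto (-6/7) (gamma_ne_of_frac (by norm_num) (by norm_num))
  have hB := gamma_ratio_tendsto (-4/7) (gamma_ne_of_frac (by norm_num) (by norm_num))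
  have hC := gamma_ratio_tendsto (-1/2) (gamma_ne_of_frac (by norm_num) (by norm_num))
  have hmain := ((hb.mul ((hA.mul hB).div hC one_ne_zero)).div_const b)
  rw [show b * (1 * 1 / 1) / b = 1 by field_simp] at hmain
  refine hmain.congr' ?_
  filter_upwards [eventually_ge_atTop 1] with n hn
  have hx : (0:ℝ) < (n : ℝ) := by exact_mod_cast hn
    -- duplication formula
  have hdup := Real.Gamma_mul_Gamma_add_half ((n:ℝ) + 1/2)
  rw [show (n:ℝ) + 1/2 + 1/2 = (n:ℝ) + 1 by ring,
    show (1:ℝ) - 2 * ((n:ℝ) + 1/2) = -((2*n : ℕ) : ℝ) by push_cast; ring,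
    show 2 * ((n:ℝ) + 1/2) = 2 * (n:ℝ) + 1 by ring,
    Real.rpow_neg (by norm_num), Real.rpow_natCast, pow_mul,
    show (2:ℝ)^2 = 4 by norm_num] at hdup
  have hG2 : Real.Gamma (2 * (n:ℝ) + 1) =
      Real.Gamma ((n:ℝ) + 1/2) * Real.Gamma ((n:ℝ) + 1) * (4:ℝ)^n / Real.sqrt Real.pi := by
    rw [eq_div_iff (ne_of_gt hsp), hdup]
    field_simp
  -- positivity
  have hg1 : 0 < Real.Gamma ((n:ℝ) + 1/7) := Real.Gamma_pos_of_pos (by positivity)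
  have hg3 : 0 < Real.Gamma ((n:ℝ) + 3/7) := Real.Gamma_pos_of_pos (by positivity)
  have hgh : 0 < Real.Gamma ((n:ℝ) + 1/2) := Real.Gamma_pos_of_pos (by positivity)
  have hg0 : 0 < Real.Gamma ((n:ℝ) + 1) := Real.Gamma_pos_of_pos (by positivity)
  have hr1 : (0:ℝ) < (n:ℝ) ^ (-6/7 : ℝ) := Real.rpow_pos_of_pos hx _
  have hr2 : (0:ℝ) < (n:ℝ) ^ (-4/7 : ℝ) := Real.rpow_pos_of_pos hx _
  have hr3 : (0:ℝ) < (n:ℝ) ^ (-1/2 : ℝ) := Real.rpow_pos_of_pos hx _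
  have hr4 : (0:ℝ) < (n:ℝ) ^ (-(13/14) : ℝ) := Real.rpow_pos_of_pos hx _
  have hxr : (n:ℝ) ^ (-(13/14) : ℝ) = (n:ℝ) ^ (-6/7 : ℝ) * (n:ℝ) ^ (-4/7 : ℝ) / (n:ℝ) ^ (-1/2 : ℝ) := by
    rw [eq_div_iff (ne_of_gt hr3), ← Real.rpow_add hx, ← Real.rpow_add hx]
    norm_num
  have hpow : (49/4 : ℝ)^n = (49/16 : ℝ)^n * (4:ℝ)^n := by
    rw [← mul_pow]; norm_num
  simp only [Pi.div_apply, show (n:ℝ) + 1 + (-6/7 : ℝ) = (n:ℝ) + 1/7 by ring,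
    show (n:ℝ) + 1 + (-4/7 : ℝ) = (n:ℝ) + 3/7 by ring,
    show (n:ℝ) + 1 + (-1/2 : ℝ) = (n:ℝ) + 1/2 by ring]
  rw [hG2, hpow, hxr]
  field_simp
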